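/- arXiv:1612.06911 — 3 statements merged into one kernel-verified Lean document; each statement's English description precedes it below -/
import Mathlib

section
/- Let A, A' be dually paired graded Hopf ℤ-algebras as above, with m_x : A → A left multiplication by x ∈ A and Δ_y : A → A adjoint to right multiplication by y ∈ A'. Then the ℤ-linear map φ : A ⊗ A' → End_ℤ(A) sending x ⊗ y to m_x ∘ Δ_y is injective. -/
open scoped TensorProduct DirectSum

/-!
STATEMENT 4: For dually paired graded connected Hopf ℤ-algebras `A`, `A'` with free
finitely generated graded components and perfect (graded) pairing `B`, the map
`φ : A ⊗ A' → End_ℤ(A)`, `x ⊗ y ↦ m_x ∘ Δ_y` (left multiplication composed with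
the adjoint `D y` of right multiplication by `y`), is injective.
-/

/-- Auxiliary separation lemma: a free module tensor an arbitrary module,
contracted against a separating family of functionals. -/
lemma heis_aux_sep {M N ι : Type*} [AddCommGroup M] [AddCommGroup N]
    [Module ℤ M] [Module ℤ N] [Module.Free ℤ M]
    (g : ι → (N →ₗ[ℤ] ℤ)) (hsep : ∀ y : N, (∀ i, g i y = 0) → y = 0)
    (u : M ⊗[ℤ] N)
    (hu : ∀ i, (TensorProduct.lift (@LinearMap.flip ℤ ℤ ℤ ℤ _ _ _ _ N M M _ _ _ _ _ _ _
      (@SMulCommClass.mk ℤ ℤ M (@Module.toDistribMulAction ℤ M _ _ ‹Module ℤ M›).toMulAction.toSMul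
        (@Module.toDistribMulAction ℤ M _ _ ‹Module ℤ M›).toMulAction.toSMul fun a b m => by
        have h := fun r s : ℤ => @mul_smul ℤ M _
          (@Module.toDistribMulAction ℤ M _ _ ‹Module ℤ M›).toMulAction.toSemigroupAction r s m
        rw [← h, ← h, mul_comm]) _ _ ((LinearMap.lsmul ℤ M).comp (g i))) u : M) = 0) :
    u = 0 := by
  classical
  let bb := Module.Free.chooseBasis ℤ M
  let E := (TensorProduct.congr bb.repr (LinearEquiv.refl ℤ N)).trans
      (TensorProduct.finsuppScalarLeft ℤ N (Module.Free.ChooseBasisIndex ℤ M))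
  have key : ∀ (i : ι) (k : Module.Free.ChooseBasisIndex ℤ M) (v : M ⊗[ℤ] N),
      (g i) ((E v) k) =
        bb.coord k (TensorProduct.lift (@LinearMap.flip ℤ ℤ ℤ ℤ _ _ _ _ N M M _ _ _ _ _ _ _
      (@SMulCommClass.mk ℤ ℤ M (@Module.toDistribMulAction ℤ M _ _ ‹Module ℤ M›).toMulAction.toSMul
        (@Module.toDistribMulAction ℤ M _ _ ‹Module ℤ M›).toMulAction.toSMul fun a b m => by
        have h := fun r s : ℤ => @mul_smul ℤ M _
          (@Module.toDistribMulAction ℤ M _ _ ‹Module ℤ M›).toMulAction.toSemigroupAction r s m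
        rw [← h, ← h, mul_comm]) _ _ ((LinearMap.lsmul ℤ M).comp (g i))) v) := by
    intro i k v
    induction v using TensorProduct.induction_on with
    | zero => simp
    | tmul x y => simp [E, Module.Basis.coord_apply, smul_eq_mul, mul_comm]
    | add v w hv hw => simp [map_add, hv, hw]
  have hE : E u = 0 := by
    ext k
    refine hsep _ fun i => ?_
    rw [key i k u, hu i, map_zero]
  have := congrArg E.symm hE
  simpa using this

set_option maxHeartbeats 3200000 in
set_option synthInstance.maxHeartbeats 400000 in
theorem heisenberg_double_phi_injective
    (A A' : Type*) [Ring A] [Ring A']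
    (𝒜 : ℕ → Submodule ℤ A) (𝒜' : ℕ → Submodule ℤ A')
    [GradedRing 𝒜] [GradedRing 𝒜']
    -- connectedness
    (hconn : 𝒜 0 = Submodule.span ℤ {(1 : A)})
    (hconn' : 𝒜' 0 = Submodule.span ℤ {(1 : A')})
    -- components finitely generated and free
    (hfg : ∀ n, (𝒜 n).FG) (hfg' : ∀ n, (𝒜' n).FG)
    (hfree : ∀ n, Module.Free ℤ (𝒜 n)) (hfree' : ∀ n, Module.Free ℤ (𝒜' n))
    -- the pairing, graded and perfect
    (B : A →ₗ[ℤ] A' →ₗ[ℤ] ℤ)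
    (hgraded : ∀ m n, m ≠ n → ∀ a ∈ 𝒜 m, ∀ y ∈ 𝒜' n, B a y = 0)
    (hndA : ∀ a : A, (∀ y : A', B a y = 0) → a = 0)
    (hndA' : ∀ y : A', (∀ a : A, B a y = 0) → y = 0)
    -- left multiplication `m_x` as a bilinear map
    (ML : A →ₗ[ℤ] A →ₗ[ℤ] A) (hML : ∀ x a : A, ML x a = x * a)
    -- `D y` is the adjoint of right multiplication by `y ∈ A'`
    (D : A' →ₗ[ℤ] A →ₗ[ℤ] A)
    (hD : ∀ (y : A') (a : A) (z : A'), B (D y a) z = B a (z * y)) :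
    Function.Injective
      (TensorProduct.lift (((LinearMap.llcomp ℤ A A A).comp ML).compl₂ D) :
        A ⊗[ℤ] A' →ₗ[ℤ] A →ₗ[ℤ] A) := by
  classical
  set φ := (TensorProduct.lift (((LinearMap.llcomp ℤ A A A).comp ML).compl₂ D) :
      A ⊗[ℤ] A' →ₗ[ℤ] A →ₗ[ℤ] A) with hφdef
  rw [injective_iff_map_eq_zero]
  intro t ht
  by_contra htne
  -- φ on pure tensors
  have hφtmul : ∀ (x : A) (y : A') (a : A), φ (x ⊗ₜ[ℤ] y) a = x * D y a := by
    intro x y a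
    simp only [hφdef, TensorProduct.lift.tmul, LinearMap.compl₂_apply, LinearMap.comp_apply,
      LinearMap.llcomp_apply, hML]
  -- nondegeneracy from homogeneous elements
  have hzero : ∀ a : A, (∀ m : ℕ, ∀ z ∈ 𝒜' m, B a z = 0) → a = 0 := by
    intro a h
    refine hndA a fun y => ?_
    conv_lhs => rw [← DirectSum.sum_support_decompose 𝒜' y]
    rw [map_sum]
    exact Finset.sum_eq_zero fun m _ => h m _ (DirectSum.decompose 𝒜' y m).2
  have hzero' : ∀ y : A', (∀ m : ℕ, ∀ a ∈ 𝒜 m, B a y = 0) → y = 0 := by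
    intro y h
    refine hndA' y fun a => ?_
    conv_lhs => rw [← DirectSum.sum_support_decompose 𝒜 a]
    rw [map_sum, LinearMap.sum_apply]
    exact Finset.sum_eq_zero fun m _ => h m _ (DirectSum.decompose 𝒜 a m).2
  -- pairing a homogeneous component against a homogeneous element
  have hcomp : ∀ (w : A) (m : ℕ) (z : A'), z ∈ 𝒜' m →
      B (DirectSum.decompose 𝒜 w m : A) z = B w z := by
    intro w m z hz
    symm
    calc B w z = ∑ m' ∈ (DirectSum.decompose 𝒜 w).support,
        B (DirectSum.decompose 𝒜 w m' : A) z := by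
          conv_lhs => rw [← DirectSum.sum_support_decompose 𝒜 w]
          rw [map_sum, LinearMap.sum_apply]
      _ = B (DirectSum.decompose 𝒜 w m : A) z := by
          refine Finset.sum_eq_single m
            (fun b _ hb => hgraded b m hb _ (DirectSum.decompose 𝒜 w b).2 z hz) (fun hm => ?_)
          rw [DFinsupp.notMem_support_iff.mp hm]
          simp
  -- components of D y a
  have hD0 : ∀ (Q q m : ℕ) (a : A) (y : A'), a ∈ 𝒜 Q → y ∈ 𝒜' q → m + q ≠ Q →
      DirectSum.decompose 𝒜 (D y a) m = 0 := by
    intro Q q m a y ha hy hne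
    refine ZeroMemClass.coe_eq_zero.mp (hzero _ fun n z hz => ?_)
    by_cases hnm : n = m
    · subst hnm
      rw [hcomp _ _ _ hz, hD]
      exact hgraded Q (n + q) (fun h => hne (by omega)) a ha _ (SetLike.mul_mem_graded hz hy)
    · exact hgraded m n (fun h => hnm h.symm) _ (DirectSum.decompose 𝒜 (D y a) m).2 z hz
  have hDmem : ∀ (Q q : ℕ) (a : A) (y : A'), a ∈ 𝒜 Q → y ∈ 𝒜' q → q ≤ Q →
      D y a ∈ 𝒜 (Q - q) := by
    intro Q q a y ha hy hq
    rw [← DirectSum.sum_support_decompose 𝒜 (D y a)]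
    refine Submodule.sum_mem _ fun m _ => ?_
    by_cases h : m = Q - q
    · exact h ▸ (DirectSum.decompose 𝒜 (D y a) m).2
    · rw [hD0 Q q m a y ha hy (by omega)]
      simp
  have hDzero : ∀ (Q q : ℕ) (a : A) (y : A'), a ∈ 𝒜 Q → y ∈ 𝒜' q → Q < q →
      D y a = 0 := by
    intro Q q a y ha hy hq
    rw [← DirectSum.sum_support_decompose 𝒜 (D y a)]
    refine Finset.sum_eq_zero fun m _ => ?_
    rw [hD0 Q q m a y ha hy (by omega)]
    simp
  -- connectedness: top-degree contraction
  have hDconn : ∀ (Q : ℕ) (a : A) (y : A'), a ∈ 𝒜 Q → y ∈ 𝒜' Q →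
      (B 1 1) • D y a = (B a y) • (1 : A) := by
    intro Q a y ha hy
    have hw : D y a ∈ 𝒜 (Q - Q) := hDmem Q Q a y ha hy le_rfl
    rw [Nat.sub_self, hconn] at hw
    obtain ⟨c, hc⟩ := Submodule.mem_span_singleton.mp hw
    have hBa : B a y = c * B 1 1 := by
      have h1 := hD y a 1
      rw [one_mul] at h1
      rw [← h1, ← hc, map_smul, LinearMap.smul_apply, smul_eq_mul]
    rw [← hc, hBa, smul_smul, mul_comm]
  -- the graded pieces of the tensor product
  let j : ∀ (p q : ℕ), ((𝒜 p) ⊗[ℤ] (𝒜' q)) →ₗ[ℤ] (A ⊗[ℤ] A') :=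
    fun p q => TensorProduct.map (𝒜 p).subtype (𝒜' q).subtype
  -- behavior of φ on graded pieces
  have hφj_mem : ∀ (p q Q : ℕ) (a : 𝒜 Q) (u : (𝒜 p) ⊗[ℤ] (𝒜' q)), q ≤ Q →
      φ (j p q u) (a : A) ∈ 𝒜 (p + (Q - q)) := by
    intro p q Q a u hq
    induction u using TensorProduct.induction_on with
    | zero => simp
    | tmul x y =>
        rw [show j p q (x ⊗ₜ y) = (x : A) ⊗ₜ[ℤ] (y : A') from rfl, hφtmul]
        exact SetLike.mul_mem_graded x.2 (hDmem Q q _ _ a.2 y.2 hq)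
    | add v w hv hw =>
        rw [map_add, map_add, LinearMap.add_apply]
        exact Submodule.add_mem _ hv hw
  have hφj_zero : ∀ (p q Q : ℕ) (a : 𝒜 Q) (u : (𝒜 p) ⊗[ℤ] (𝒜' q)), Q < q →
      φ (j p q u) (a : A) = 0 := by
    intro p q Q a u hq
    induction u using TensorProduct.induction_on with
    | zero => simp
    | tmul x y =>
        rw [show j p q (x ⊗ₜ y) = (x : A) ⊗ₜ[ℤ] (y : A') from rfl, hφtmul,
          hDzero Q q _ _ a.2 y.2 hq, mul_zero]
    | add v w hv hw =>
        rw [map_add, map_add, LinearMap.add_apply, hv, hw, add_zero]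
  -- contraction of the top piece
  let g : ∀ (Q : ℕ), (𝒜 Q) → ((𝒜' Q) →ₗ[ℤ] ℤ) :=
    fun Q a => (B (a : A)).comp (𝒜' Q).subtype
  let Φ : ∀ (p Q : ℕ), (𝒜 Q) → (((𝒜 p) ⊗[ℤ] (𝒜' Q)) →ₗ[ℤ] 𝒜 p) :=
    fun p Q a => TensorProduct.lift (((LinearMap.lsmul ℤ (𝒜 p)).comp (g Q a)).flip)
  have hφj_top : ∀ (p Q : ℕ) (a : 𝒜 Q) (u : (𝒜 p) ⊗[ℤ] (𝒜' Q)),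
      (B 1 1) • (φ (j p Q u) (a : A)) = ((Φ p Q a u : 𝒜 p) : A) := by
    intro p Q a u
    induction u using TensorProduct.induction_on with
    | zero => simp
    | tmul x y =>
        rw [show j p Q (x ⊗ₜ y) = (x : A) ⊗ₜ[ℤ] (y : A') from rfl, hφtmul]
        have h1 : ((Φ p Q a (x ⊗ₜ y) : 𝒜 p) : A) = (B (a : A) (y : A')) • (x : A) := rfl
        rw [h1, ← mul_smul_comm, hDconn Q _ _ a.2 y.2, mul_smul_comm, mul_one]
    | add v w hv hw =>
        rw [map_add, map_add, LinearMap.add_apply, smul_add, hv, hw, map_add,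
          Submodule.coe_add]
  -- decompose t
  let e : (A ⊗[ℤ] A') ≃ₗ[ℤ] ⨁ (pq : ℕ × ℕ), ((𝒜 pq.1) ⊗[ℤ] (𝒜' pq.2)) :=
    (TensorProduct.congr (DirectSum.decomposeLinearEquiv 𝒜)
        (DirectSum.decomposeLinearEquiv 𝒜')).trans
      (TensorProduct.directSum ℤ ℤ (fun p => (𝒜 p : Type _)) (fun q => (𝒜' q : Type _)))
  have hesymm : ∀ (p q : ℕ) (u : (𝒜 p) ⊗[ℤ] (𝒜' q)),
      e.symm (DirectSum.of (fun pq : ℕ × ℕ => ((𝒜 pq.1) ⊗[ℤ] (𝒜' pq.2))) (p, q) u) =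
        j p q u := by
    intro p q u
    induction u using TensorProduct.induction_on with
    | zero => simp
    | tmul x y =>
        rw [← DirectSum.lof_eq_of ℤ (ℕ × ℕ) (fun pq : ℕ × ℕ => ((𝒜 pq.1) ⊗[ℤ] (𝒜' pq.2)))
          (p, q) (x ⊗ₜ y)]
        show _ = (x : A) ⊗ₜ[ℤ] (y : A')
        rw [LinearEquiv.symm_apply_eq]
        show _ = TensorProduct.directSum ℤ ℤ (fun p => (𝒜 p : Type _)) (fun q => (𝒜' q : Type _))
          (TensorProduct.congr (DirectSum.decomposeLinearEquiv 𝒜)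
            (DirectSum.decomposeLinearEquiv 𝒜') ((x : A) ⊗ₜ[ℤ] (y : A')))
        rw [TensorProduct.congr_tmul]
        simp only [DirectSum.decomposeLinearEquiv_apply, DirectSum.decompose_coe,
          ← DirectSum.lof_eq_of ℤ, TensorProduct.directSum_lof_tmul_lof]
        rfl
    | add v w hv hw =>
        rw [map_add, map_add, hv, hw, ← map_add]
  set s := e t with hs
  have hsne : s ≠ 0 := by
    intro h
    rw [hs] at h
    exact htne (by simpa using congrArg e.symm h)
  have hsupp : s.support.Nonempty := by
    rw [Finset.nonempty_iff_ne_empty]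
    exact fun h => hsne (DFinsupp.support_eq_empty.mp h)
  -- choose P minimal, then Q maximal in row P
  let P : ℕ := (s.support.image Prod.fst).min' (hsupp.image _)
  have hPle : ∀ pq ∈ s.support, P ≤ pq.1 :=
    fun pq h => Finset.min'_le _ _ (Finset.mem_image_of_mem _ h)
  have hProw : ((s.support.filter (fun pq => pq.1 = P)).image Prod.snd).Nonempty := by
    have := (s.support.image Prod.fst).min'_mem (hsupp.image _)
    rw [Finset.mem_image] at this
    obtain ⟨pq, hpq, hfst⟩ := this
    exact ⟨pq.2, Finset.mem_image_of_mem _ (Finset.mem_filter.mpr ⟨hpq, hfst⟩)⟩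
  let Q : ℕ := ((s.support.filter (fun pq => pq.1 = P)).image Prod.snd).max' hProw
  have hQmem : (P, Q) ∈ s.support := by
    have := ((s.support.filter (fun pq => pq.1 = P)).image Prod.snd).max'_mem hProw
    rw [Finset.mem_image] at this
    obtain ⟨pq, hpq, hsnd⟩ := this
    rw [Finset.mem_filter] at hpq
    have : pq = (P, Q) := Prod.ext hpq.2 hsnd
    exact this ▸ hpq.1
  have hQge : ∀ pq ∈ s.support, pq.1 = P → pq.2 ≤ Q := fun pq h hp =>
    Finset.le_max' _ _ (Finset.mem_image_of_mem _ (Finset.mem_filter.mpr ⟨h, hp⟩))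
  -- the key vanishing
  have hkey : ∀ a : 𝒜 Q, Φ P Q a (s (P, Q)) = 0 := by
    intro a
    have ht' : t = ∑ pq ∈ s.support, j pq.1 pq.2 (s pq) := by
      conv_lhs => rw [← e.symm_apply_apply t, ← hs, ← DirectSum.sum_support_of s]
      rw [map_sum]
      refine Finset.sum_congr rfl fun pq _ => ?_
      obtain ⟨p, q⟩ := pq
      exact hesymm p q _
    have h2 : (0 : A) = ∑ pq ∈ s.support, (B 1 1) • (φ (j pq.1 pq.2 (s pq)) (a : A)) := by
      have : φ t (a : A) = 0 := by rw [ht]; rfl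
      calc (0 : A) = (B 1 1) • (φ t (a : A)) := by rw [this, smul_zero]
        _ = ∑ pq ∈ s.support, (B 1 1) • (φ (j pq.1 pq.2 (s pq)) (a : A)) := by
            rw [ht', map_sum, LinearMap.sum_apply, Finset.smul_sum]
    have h4 : (0 : A) =
        ∑ pq ∈ s.support, (DirectSum.decompose 𝒜
          ((B 1 1) • (φ (j pq.1 pq.2 (s pq)) (a : A))) P : A) := by
      have h3 := congrArg (fun w => ((DirectSum.decomposeLinearEquiv 𝒜 w) P : A)) h2
      simp only [map_zero, DirectSum.zero_apply, ZeroMemClass.coe_zero, map_sum,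
        DirectSum.decomposeLinearEquiv_apply] at h3
      rw [DFinsupp.finset_sum_apply, AddSubmonoidClass.coe_finset_sum] at h3
      exact h3
    have h5 : (0 : A) = ((Φ P Q a (s (P, Q)) : 𝒜 P) : A) := by
      rw [h4]
      refine Finset.sum_eq_single (P, Q) (fun pq hpq hne => ?_) (fun h => absurd hQmem h) |>.trans ?_
      · obtain ⟨p, q⟩ := pq
        by_cases hq : q ≤ Q
        · have hmem : (B 1 1) • (φ (j p q (s (p, q))) (a : A)) ∈ 𝒜 (p + (Q - q)) :=
            Submodule.smul_mem _ _ (hφj_mem p q Q a _ hq)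
          have hne' : p + (Q - q) ≠ P := by
            have h1 : P ≤ p := hPle _ hpq
            rcases eq_or_ne p P with hp | hp
            · have : q ≠ Q := fun h => hne (by rw [hp, h])
              have hq2 : q ≤ Q := hQge _ hpq hp
              omega
            · omega
          rw [DirectSum.decompose_of_mem_ne 𝒜 hmem hne']
        · rw [hφj_zero p q Q a _ (by omega), smul_zero]
          simp
      · rw [hφj_top P Q a (s (P, Q))]
        rw [DirectSum.decompose_of_mem_same 𝒜 (Φ P Q a (s (P, Q))).2]
    exact ZeroMemClass.coe_eq_zero.mp h5.symm
  -- separation: conclude s (P, Q) = 0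
  haveI := hfree P
  have hsepQ : ∀ y : 𝒜' Q, (∀ a : 𝒜 Q, g Q a y = 0) → y = 0 := by
    intro y h
    refine ZeroMemClass.coe_eq_zero.mp (hzero' _ fun m b hb => ?_)
    rcases eq_or_ne m Q with hm | hm
    · subst hm; exact h ⟨b, hb⟩
    · exact hgraded m Q hm b hb _ y.2
  have : s (P, Q) = 0 := heis_aux_sep (g Q) hsepQ (s (P, Q)) hkey
  exact DFinsupp.mem_support_iff.mp hQmem this
end

section
/- In a positive self-adjoint Hopf algebra A (graded connected Hopf ℤ-algebra with inner product, distinguished orthogonal basis, multiplication adjoint to comultiplication, both positive), for any primitive element p in the distinguished basis with ⟨p,p⟩ = 1, the operators M_p (multiplication by p) and D_p (adjoint of multiplication by p) satisfy [D_p, M_p] = id. -/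
open scoped TensorProduct

/-!
STATEMENT 12: In a positive self-adjoint Hopf (PSH) algebra `A` — a graded
connected Hopf `ℤ`-algebra with inner product `B`, multiplication adjoint to
comultiplication `Δ` — for any primitive element `p` with `⟨p, p⟩ = 1`, the
operators `M_p` (multiplication by `p`) and `D_p` (adjoint of multiplication
by `p`) satisfy `[D_p, M_p] = id`.
-/

/-- Every element of a tensor product has a Sweedler-style expansion indexed by
a finite set of naturals. -/
lemma exists_nat_repr {M N : Type*} [AddCommGroup M] [AddCommGroup N]
    [Module ℤ M] [Module ℤ N] (t : M ⊗[ℤ] N) :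
    ∃ (s : Finset ℕ) (u : ℕ → M) (v : ℕ → N), t = ∑ i ∈ s, u i ⊗ₜ[ℤ] v i := by
  classical
  induction t with
  | zero => exact ⟨∅, 0, 0, by simp⟩
  | tmul a b => exact ⟨{0}, fun _ => a, fun _ => b, by simp⟩
  | add x y hx hy =>
    obtain ⟨s, u, v, hs⟩ := hx
    obtain ⟨s', u', v', hs'⟩ := hy
    refine ⟨s.image (fun i => 2 * i) ∪ s'.image (fun i => 2 * i + 1),
      fun k => if k % 2 = 0 then u (k / 2) else u' (k / 2),
      fun k => if k % 2 = 0 then v (k / 2) else v' (k / 2), ?_⟩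
    rw [Finset.sum_union, Finset.sum_image (by intro a _ b _ h; have h' : 2 * a = 2 * b := h; omega),
      Finset.sum_image (by intro a _ b _ h; have h' : 2 * a + 1 = 2 * b + 1 := h; omega)]
    · have h1 : ∀ i : ℕ, (2 * i) % 2 = 0 := by omega
      have h2 : ∀ i : ℕ, (2 * i) / 2 = i := by omega
      have h3 : ∀ i : ℕ, ¬ ((2 * i + 1) % 2 = 0) := by omega
      have h4 : ∀ i : ℕ, (2 * i + 1) / 2 = i := by omega
      simp only [h1, h2, h3, h4, if_true, if_false, hs, hs']
    · rw [Finset.disjoint_left]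
      rintro a ha ha'
      simp only [Finset.mem_image] at ha ha'
      omega

theorem psh_primitive_heisenberg_relation
    (A : Type*) [CommRing A]
    (B : A →ₗ[ℤ] A →ₗ[ℤ] ℤ)
    (hsymm : ∀ x y, B x y = B y x)
    (hnd : ∀ x, (∀ y, B x y = 0) → x = 0)
    (Δ : A →ₐ[ℤ] A ⊗[ℤ] A)
    -- multiplication is adjoint to comultiplication (Sweedler form)
    (hcompat : ∀ (z x y : A) (s : Finset ℕ) (u v : ℕ → A),
      Δ z = ∑ i ∈ s, u i ⊗ₜ[ℤ] v i →
      B (x * y) z = ∑ i ∈ s, B x (u i) * B y (v i))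
    -- counit data
    (ε : A →ₐ[ℤ] ℤ)
    (hcounit : ∀ (x : A) (s : Finset ℕ) (u v : ℕ → A),
      Δ x = ∑ i ∈ s, u i ⊗ₜ[ℤ] v i →
      (∑ i ∈ s, ε (u i) • v i = x ∧ ∑ i ∈ s, ε (v i) • u i = x))
    (hBone : ∀ x : A, B x 1 = ε x)
    (p : A)
    (hprim : Δ p = p ⊗ₜ[ℤ] 1 + 1 ⊗ₜ[ℤ] p)
    (hpp : B p p = 1)
    (D : A →ₗ[ℤ] A)
    (hD : ∀ x y, B (D x) y = B x (p * y)) :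
    D ∘ₗ LinearMap.mulLeft ℤ p - LinearMap.mulLeft ℤ p ∘ₗ D =
      LinearMap.id := by
  classical
  -- a two-term expansion of `Δ p`
  have hΔp : Δ p = ∑ i ∈ ({0, 1} : Finset ℕ),
      (fun i => if i = 0 then p else 1) i ⊗ₜ[ℤ] (fun i => if i = 0 then 1 else p) i := by
    rw [Finset.sum_pair (by norm_num)]
    simpa using hprim
  -- the counit vanishes on p
  have hεp1 : ((ε p : ℤ) : A) = 0 := by
    have h := (hcounit p _ _ _ hΔp).1
    rw [Finset.sum_pair (by norm_num)] at h
    norm_num at h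
    exact h
  have hεp : ε p = 0 := by
    have h0 : B p ((ε p) • (1 : A)) = 0 := by rw [zsmul_eq_mul, mul_one, hεp1]; simp
    rw [map_smul, smul_eq_mul, hBone] at h0
    exact mul_self_eq_zero.mp h0
  have hBp1 : B p 1 = 0 := by rw [hBone, hεp]
  -- key pairing identity: ⟨p, p·u⟩ = ε u
  have claim1 : ∀ u : A, B p (p * u) = ε u := by
    intro u
    rw [hsymm]
    have h := hcompat p p u _ _ _ hΔp
    rw [Finset.sum_pair (by norm_num)] at h
    norm_num at h
    rw [h, hpp, hBone, hBp1]
    ring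
  -- the functional T x y on A ⊗ A sending u ⊗ v to B x u * B y v
  let T : A → A → (A ⊗[ℤ] A →ₗ[ℤ] ℤ) := fun x y => TensorProduct.lift
    { toFun := fun a => (B x a) • (B y)
      map_add' := fun a b => by rw [map_add, add_smul]
      map_smul' := fun c a => by rw [map_smul, smul_assoc, RingHom.id_apply] }
  have Ttmul : ∀ x y u v : A, T x y (u ⊗ₜ[ℤ] v) = B x u * B y v := by
    intro x y u v
    simp only [T]; erw [TensorProduct.lift.tmul]; simp [smul_eq_mul]
  -- the linear map C on A ⊗ A sending u ⊗ v to ε u • v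
  let C : A ⊗[ℤ] A →ₗ[ℤ] A := TensorProduct.lift
    { toFun := fun u => (ε u) • (LinearMap.id : A →ₗ[ℤ] A)
      map_add' := fun a b => by rw [map_add, add_smul]
      map_smul' := fun c a => by rw [map_zsmul, smul_assoc, RingHom.id_apply] }
  have Ctmul : ∀ u v : A, C (u ⊗ₜ[ℤ] v) = ε u • v := by
    intro u v
    simp only [C]; erw [TensorProduct.lift.tmul]; simp
  -- key reformulations
  have key : ∀ x y z : A, B (x * y) z = T x y (Δ z) := by
    intro x y z
    obtain ⟨s, u, v, h⟩ := exists_nat_repr (Δ z)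
    rw [hcompat z x y s u v h, h, map_sum]
    simp only [Ttmul]
  have keyC : ∀ z : A, C (Δ z) = z := by
    intro z
    obtain ⟨s, u, v, h⟩ := exists_nat_repr (Δ z)
    rw [h, map_sum]
    simp only [Ctmul]
    exact (hcounit z s u v h).1
  -- two tensor-product identities
  have L1 : ∀ (x : A) (t : A ⊗[ℤ] A), T p x ((p ⊗ₜ[ℤ] (1 : A)) * t) = B x (C t) := by
    intro x t
    induction t with
    | zero => simp
    | tmul u v =>
      rw [Algebra.TensorProduct.tmul_mul_tmul, Ttmul, Ctmul, claim1, map_smul,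
        one_mul]
      simp [mul_comm]
    | add a b ha hb => simp only [mul_add, map_add, ha, hb]
  have L2 : ∀ (x : A) (t : A ⊗[ℤ] A), T p x (((1 : A) ⊗ₜ[ℤ] p) * t) = T p (D x) t := by
    intro x t
    induction t with
    | zero => simp
    | tmul u v =>
      rw [Algebra.TensorProduct.tmul_mul_tmul, Ttmul, Ttmul, one_mul, hD]
    | add a b ha hb => simp only [mul_add, map_add, ha, hb]
  -- main computation
  ext x
  simp only [LinearMap.sub_apply, LinearMap.comp_apply, LinearMap.mulLeft_apply,
    LinearMap.id_apply]
  have main : ∀ y : A, B (D (p * x) - p * D x - x) y = 0 := by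
    intro y
    have h1 : B (D (p * x)) y = B x y + B (p * D x) y := by
      rw [hD, key p x (p * y), map_mul, hprim, add_mul, map_add, L1, L2, keyC,
        key p (D x) y]
    simp only [map_sub, LinearMap.sub_apply, h1]
    ring
  have := hnd _ main
  have h2 : D (p * x) - p * D x - x = 0 := this
  linear_combination h2
end

section
/- Let Λ = ⊕_n K_0(Rep(S_n)) with multiplication by induction and comultiplication by restriction: Δ[V] = Σ_{i+j=n} [Res_{S_i × S_j}^{S_n} V] for V ∈ Rep(S_n). Then Δ is an algebra homomorphism; equivalently, the Mackey formula for the pair of subgroups S_m × S_n and S_i × S_j in S_{m+n} yields the bialgebra compatibility Δ(xy) = Δ(x)Δ(y). -/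
open Equiv

/-!
STATEMENT 18: In `Λ = ⊕_n K₀(Rep(S_n))`, with multiplication by induction and
comultiplication by restriction, `Δ` is an algebra homomorphism: the Mackey
double-coset formula for the subgroups `S_i × S_j` and `S_m × S_n` of `S_{m+n}`
gives the bialgebra compatibility `Δ(x·y) = Δ(x)·Δ(y)`.  We formalize this at
the level of (virtual) characters, which determine `K₀`: for class functions
`x` on `S_m`, `y` on `S_n` and any `i + j = m + n`, the restriction to
`S_i × S_j` of the class function induced from `x ⊠ y` on `S_m × S_n` equals
the sum over `a + b = i`, `c + d = j`, `a + c = m`, `b + d = n` of the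
functions induced from `(S_a × S_b) × (S_c × S_d)` of the correspondingly
shuffled restrictions of `x` and `y`.
-/

/-- Transport of permutations along an equivalence, as a group homomorphism. -/
def permHom {α γ : Type*} (e : α ≃ γ) : Equiv.Perm α →* Equiv.Perm γ :=
  MonoidHom.mk' (fun p => e.permCongr p) (by
    intro p q; ext z; simp [Equiv.permCongr_apply, Equiv.Perm.mul_apply])

/-- The block embedding `S_a × S_b →* S_c` associated to an identification
`Fin a ⊕ Fin b ≃ Fin c` of the underlying sets. -/
def blockEmb {a b c : ℕ} (e : Fin a ⊕ Fin b ≃ Fin c) :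
    Equiv.Perm (Fin a) × Equiv.Perm (Fin b) →* Equiv.Perm (Fin c) :=
  (permHom e).comp (Equiv.Perm.sumCongrHom (Fin a) (Fin b))

/-- A class function: invariant under conjugation. -/
def IsClassFun {G : Type*} [Group G] (f : G → ℂ) : Prop :=
  ∀ g h : G, f (h * g * h⁻¹) = f g

/-- The induced class function along `φ : H →* G`. -/
noncomputable def indCF {H G : Type*} [Group H] [Group G] [Fintype H] [Fintype G]
    (φ : H →* G) (f : H → ℂ) : G → ℂ :=
  fun g => (Fintype.card H : ℂ)⁻¹ * ∑ x : G, Function.extend (⇑φ) f 0 (x * g * x⁻¹)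


lemma blockEmb_apply {a b c : ℕ} (e : Fin a ⊕ Fin b ≃ Fin c)
    (p : Equiv.Perm (Fin a)) (q : Equiv.Perm (Fin b)) (z : Fin c) :
    blockEmb e (p, q) z = e (Sum.map ⇑p ⇑q (e.symm z)) := rfl

lemma permHom_injective {α γ : Type*} (e : α ≃ γ) : Function.Injective (permHom e) :=
  fun p q h => e.permCongr.injective h

lemma blockEmb_injective {a b c : ℕ} (e : Fin a ⊕ Fin b ≃ Fin c) :
    Function.Injective (blockEmb e) :=
  fun p q h => Equiv.Perm.sumCongrHom_injective (permHom_injective e h)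

/-- `{s : α ⊕ β // s.isLeft} ≃ α`. -/
def isLeftEquiv (α β : Type*) : {s : α ⊕ β // s.isLeft = true} ≃ α where
  toFun s := s.1.getLeft s.2
  invFun a := ⟨Sum.inl a, rfl⟩
  left_inv := by rintro ⟨(a | b), hs⟩ <;> simp_all
  right_inv a := rfl

lemma card_isLeft (α β : Type*) [Fintype α] [Fintype β] :
    Fintype.card {s : α ⊕ β // s.isLeft = true} = Fintype.card α :=
  Fintype.card_congr (isLeftEquiv α β)

lemma card_sum_subtype {α β : Type*} [Fintype α] [Fintype β]
    (P : α ⊕ β → Prop) [DecidablePred P] :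
    Fintype.card {s // P s} =
      Fintype.card {a // P (Sum.inl a)} + Fintype.card {b // P (Sum.inr b)} := by
  rw [Fintype.card_congr (Equiv.subtypeSum (p := P)), Fintype.card_sum]

lemma existsPermPred {α : Type*} [Fintype α] (P Q : α → Prop)
    [DecidablePred P] [DecidablePred Q]
    (h : Fintype.card {z // P z} = Fintype.card {z // Q z}) :
    ∃ p : Equiv.Perm α, ∀ z, P (p z) ↔ Q z := by
  have h2 : Fintype.card {z // ¬Q z} = Fintype.card {z // ¬P z} := by
    rw [Fintype.card_subtype_compl, Fintype.card_subtype_compl, h]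
  refine ⟨(Equiv.sumCompl Q).symm.trans ((Equiv.sumCongr
    (Fintype.equivOfCardEq h.symm) (Fintype.equivOfCardEq h2)).trans (Equiv.sumCompl P)), ?_⟩
  intro z
  by_cases hz : Q z
  · simp only [Equiv.trans_apply, Equiv.sumCompl_symm_apply_of_pos hz,
      Equiv.sumCongr_apply, Sum.map_inl, Equiv.sumCompl_apply_inl]
    exact iff_of_true (Fintype.equivOfCardEq h.symm ⟨z, hz⟩).2 hz
  · simp only [Equiv.trans_apply, Equiv.sumCompl_symm_apply_of_neg hz,
      Equiv.sumCongr_apply, Sum.map_inr, Equiv.sumCompl_apply_inr]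
    exact iff_of_false (Fintype.equivOfCardEq h2 ⟨z, hz⟩).2 hz

lemma splitPerm {α β : Type*} [Finite α] [Finite β] (γ : Equiv.Perm (α ⊕ β))
    (h : ∀ a : α, (γ (Sum.inl a)).isLeft = true) :
    ∃ (γ₁ : Equiv.Perm α) (γ₂ : Equiv.Perm β), γ = Equiv.sumCongr γ₁ γ₂ := by
  have hf : ∀ a : α, ∃ u, γ (Sum.inl a) = Sum.inl u := by
    intro a
    rcases hx : γ (Sum.inl a) with u | u
    · exact ⟨u, rfl⟩
    · exfalso; have := h a; rw [hx] at this; simp at this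
  choose f hfs using hf
  have hfinj : Function.Injective f := by
    intro a a' haa'
    have : γ (Sum.inl a) = γ (Sum.inl a') := by rw [hfs, hfs, haa']
    simpa using γ.injective this
  have hfbij : Function.Bijective f := (Finite.injective_iff_bijective).mp hfinj
  have hg : ∀ b : β, ∃ u, γ (Sum.inr b) = Sum.inr u := by
    intro b
    rcases hx : γ (Sum.inr b) with u | u
    · obtain ⟨a, ha⟩ := hfbij.2 u
      exfalso
      have : γ (Sum.inr b) = γ (Sum.inl a) := by rw [hx, hfs, ha]
      simpa using γ.injective this
    · exact ⟨u, rfl⟩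
  choose g hgs using hg
  have hginj : Function.Injective g := by
    intro b b' hbb'
    have : γ (Sum.inr b) = γ (Sum.inr b') := by rw [hgs, hgs, hbb']
    simpa using γ.injective this
  have hgbij : Function.Bijective g := (Finite.injective_iff_bijective).mp hginj
  refine ⟨Equiv.ofBijective f hfbij, Equiv.ofBijective g hgbij, ?_⟩
  ext s
  rcases s with a | b
  · simpa using hfs a
  · simpa using hgs b

abbrev Quad (a b c d : ℕ) := (Equiv.Perm (Fin a) × Equiv.Perm (Fin b)) ×
  (Equiv.Perm (Fin c) × Equiv.Perm (Fin d))

/-- `S_a × S_b × S_c × S_d →* S_i × S_j`. -/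
def chiHom {a b c d i j : ℕ} (hi : a + b = i) (hj : c + d = j) :
    Quad a b c d →* Equiv.Perm (Fin i) × Equiv.Perm (Fin j) :=
  (blockEmb ((finSumFinEquiv : Fin a ⊕ Fin b ≃ Fin (a + b)).trans (finCongr hi))).prodMap
    (blockEmb ((finSumFinEquiv : Fin c ⊕ Fin d ≃ Fin (c + d)).trans (finCongr hj)))

/-- `S_a × S_b × S_c × S_d →* S_m × S_n` (crossed pairing). -/
def thetaHom {a b c d m n : ℕ} (hm : a + c = m) (hn : b + d = n) :
    Quad a b c d →* Equiv.Perm (Fin m) × Equiv.Perm (Fin n) :=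
  MonoidHom.mk' (fun q =>
    (blockEmb ((finSumFinEquiv : Fin a ⊕ Fin c ≃ Fin (a + c)).trans (finCongr hm)) (q.1.1, q.2.1),
     blockEmb ((finSumFinEquiv : Fin b ⊕ Fin d ≃ Fin (b + d)).trans (finCongr hn)) (q.1.2, q.2.2)))
    (by
      intro p q
      rw [Prod.ext_iff]
      exact ⟨map_mul (blockEmb _) (p.1.1, p.2.1) (q.1.1, q.2.1),
             map_mul (blockEmb _) (p.1.2, p.2.2) (q.1.2, q.2.2)⟩)

/-- Generic shuffle equivalence. -/
def shufG {A B C D I J M N : Type*} (eI : A ⊕ B ≃ I) (eJ : C ⊕ D ≃ J)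
    (eM : A ⊕ C ≃ M) (eN : B ⊕ D ≃ N) : M ⊕ N ≃ I ⊕ J :=
  (Equiv.sumCongr eM.symm eN.symm).trans
    ((Equiv.sumSumSumComm A C B D).trans (Equiv.sumCongr eI eJ))

lemma shufG_natural {A B C D I J M N : Type*} (eI : A ⊕ B ≃ I) (eJ : C ⊕ D ≃ J)
    (eM : A ⊕ C ≃ M) (eN : B ⊕ D ≃ N)
    (p1 : Equiv.Perm A) (p2 : Equiv.Perm B) (p3 : Equiv.Perm C) (p4 : Equiv.Perm D)
    (v : I ⊕ J) :
    Sum.map ⇑(eI.permCongr (Equiv.Perm.sumCongr p1 p2)) ⇑(eJ.permCongr (Equiv.Perm.sumCongr p3 p4)) v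
      = shufG eI eJ eM eN (Sum.map ⇑(eM.permCongr (Equiv.Perm.sumCongr p1 p3))
          ⇑(eN.permCongr (Equiv.Perm.sumCongr p2 p4)) ((shufG eI eJ eM eN).symm v)) := by
  rcases v with u | u
  · rcases h : eI.symm u with w | w <;>
      simp [shufG, Equiv.permCongr_apply, h, Equiv.Perm.sumCongr_apply]
  · rcases h : eJ.symm u with w | w <;>
      simp [shufG, Equiv.permCongr_apply, h, Equiv.Perm.sumCongr_apply]

lemma shufG_range {A B C D I J M N : Type*} [Finite A] [Finite B] [Finite C] [Finite D]
    (eI : A ⊕ B ≃ I) (eJ : C ⊕ D ≃ J) (eM : A ⊕ C ≃ M) (eN : B ⊕ D ≃ N)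
    (k1 : Equiv.Perm I) (k2 : Equiv.Perm J) (η1 : Equiv.Perm M) (η2 : Equiv.Perm N)
    (hyp : ∀ s : M ⊕ N, (shufG eI eJ eM eN).symm (Sum.map ⇑k1 ⇑k2 (shufG eI eJ eM eN s))
        = Sum.map ⇑η1 ⇑η2 s) :
    ∃ (p1 : Equiv.Perm A) (p2 : Equiv.Perm B) (p3 : Equiv.Perm C) (p4 : Equiv.Perm D),
      k1 = eI.permCongr (Equiv.Perm.sumCongr p1 p2) ∧
      k2 = eJ.permCongr (Equiv.Perm.sumCongr p3 p4) := by
  have hL1 : ∀ v : A, ((eI.symm.permCongr k1) (Sum.inl v)).isLeft = true := by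
    intro v
    have h := hyp (Sum.inl (eM (Sum.inl v)))
    rcases hw : (eI.symm.permCongr k1) (Sum.inl v) with w | w
    · rfl
    · exfalso
      have hfold : eI.symm (k1 (eI (Sum.inl v))) = Sum.inr w := by
        rw [← hw]; simp [Equiv.permCongr_apply]
      simp [shufG, Equiv.permCongr_apply, hfold] at h
  have hL2 : ∀ v : C, ((eJ.symm.permCongr k2) (Sum.inl v)).isLeft = true := by
    intro v
    have h := hyp (Sum.inl (eM (Sum.inr v)))
    rcases hw : (eJ.symm.permCongr k2) (Sum.inl v) with w | w
    · rfl
    · exfalso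
      have hfold : eJ.symm (k2 (eJ (Sum.inl v))) = Sum.inr w := by
        rw [← hw]; simp [Equiv.permCongr_apply]
      simp [shufG, Equiv.permCongr_apply, hfold] at h
  obtain ⟨p1, p2, hδ1⟩ := splitPerm (eI.symm.permCongr k1) hL1
  obtain ⟨p3, p4, hδ2⟩ := splitPerm (eJ.symm.permCongr k2) hL2
  refine ⟨p1, p2, p3, p4, ?_, ?_⟩
  · have : eI.permCongr (eI.symm.permCongr k1) = k1 := by
      ext z; simp [Equiv.permCongr_apply]
    rw [← this, hδ1]
  · have : eJ.permCongr (eJ.symm.permCongr k2) = k2 := by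
      ext z; simp [Equiv.permCongr_apply]
    rw [← this, hδ2]

lemma blockEmb_as_permCongr {a b c : ℕ} (e : Fin a ⊕ Fin b ≃ Fin c)
    (p : Equiv.Perm (Fin a)) (q : Equiv.Perm (Fin b)) :
    blockEmb e (p, q) = e.permCongr (Equiv.Perm.sumCongr p q) := rfl

section MainDefs

def Mconstr (m n i j aa : ℕ) : Prop := aa ≤ i ∧ aa ≤ m ∧ i - aa ≤ n ∧ m - aa ≤ j

instance (m n i j aa : ℕ) : Decidable (Mconstr m n i j aa) := by
  unfold Mconstr; infer_instance

def MIdx (m n i j : ℕ) : Type := {a : Fin (i + 1) // Mconstr m n i j a.1}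

instance (m n i j : ℕ) : Fintype (MIdx m n i j) := by unfold MIdx; infer_instance
instance (m n i j : ℕ) : DecidableEq (MIdx m n i j) := by unfold MIdx; infer_instance

variable {m n i j : ℕ}

def MD (a : MIdx m n i j) : Type :=
  Quad a.1.1 (i - a.1.1) (m - a.1.1) (n - (i - a.1.1))

instance (a : MIdx m n i j) : Group (MD a) := by unfold MD Quad; infer_instance
instance (a : MIdx m n i j) : Fintype (MD a) := by unfold MD Quad; infer_instance

def MeI (a : MIdx m n i j) : Fin a.1.1 ⊕ Fin (i - a.1.1) ≃ Fin i :=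
  (finSumFinEquiv : Fin a.1.1 ⊕ Fin (i - a.1.1) ≃ Fin (a.1.1 + (i - a.1.1))).trans
    (finCongr (by obtain ⟨h1, h2, h3, h4⟩ := a.2; omega))

def MeJ (hij : i + j = m + n) (a : MIdx m n i j) :
    Fin (m - a.1.1) ⊕ Fin (n - (i - a.1.1)) ≃ Fin j :=
  (finSumFinEquiv :
    Fin (m - a.1.1) ⊕ Fin (n - (i - a.1.1)) ≃ Fin ((m - a.1.1) + (n - (i - a.1.1)))).trans
    (finCongr (by obtain ⟨h1, h2, h3, h4⟩ := a.2; omega))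

def MeM (a : MIdx m n i j) : Fin a.1.1 ⊕ Fin (m - a.1.1) ≃ Fin m :=
  (finSumFinEquiv : Fin a.1.1 ⊕ Fin (m - a.1.1) ≃ Fin (a.1.1 + (m - a.1.1))).trans
    (finCongr (by obtain ⟨h1, h2, h3, h4⟩ := a.2; omega))

def MeN (a : MIdx m n i j) : Fin (i - a.1.1) ⊕ Fin (n - (i - a.1.1)) ≃ Fin n :=
  (finSumFinEquiv :
    Fin (i - a.1.1) ⊕ Fin (n - (i - a.1.1)) ≃ Fin ((i - a.1.1) + (n - (i - a.1.1)))).trans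
    (finCongr (by obtain ⟨h1, h2, h3, h4⟩ := a.2; omega))

def Mchi (hij : i + j = m + n) (a : MIdx m n i j) :
    MD a →* Equiv.Perm (Fin i) × Equiv.Perm (Fin j) :=
  (blockEmb (MeI a)).prodMap (blockEmb (MeJ hij a))

def Mtheta (a : MIdx m n i j) : MD a →* Equiv.Perm (Fin m) × Equiv.Perm (Fin n) :=
  MonoidHom.mk' (fun q => (blockEmb (MeM a) (q.1.1, q.2.1), blockEmb (MeN a) (q.1.2, q.2.2)))
    (by
      intro p q
      rw [Prod.ext_iff]
      exact ⟨map_mul (blockEmb _) (p.1.1, p.2.1) (q.1.1, q.2.1),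
             map_mul (blockEmb _) (p.1.2, p.2.2) (q.1.2, q.2.2)⟩)

def MS (hij : i + j = m + n) (a : MIdx m n i j) : Fin m ⊕ Fin n ≃ Fin i ⊕ Fin j :=
  shufG (MeI a) (MeJ hij a) (MeM a) (MeN a)

/-- The double-coset representative. -/
def Mt (hij : i + j = m + n) (a : MIdx m n i j) : Equiv.Perm (Fin (m + n)) :=
  (finSumFinEquiv : Fin m ⊕ Fin n ≃ Fin (m + n)).symm.trans
    ((MS hij a).trans ((finSumFinEquiv : Fin i ⊕ Fin j ≃ Fin (i + j)).trans (finCongr hij)))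

/-- The counting invariant. -/
def Mcnt (hij : i + j = m + n) (w : Equiv.Perm (Fin (m + n))) : ℕ :=
  Fintype.card {z : Fin m //
    ((((finSumFinEquiv : Fin i ⊕ Fin j ≃ Fin (i + j)).trans (finCongr hij)).symm
      (w (finSumFinEquiv (Sum.inl z)))).isLeft = true)}

lemma Mcnt_props (hij : i + j = m + n) (w : Equiv.Perm (Fin (m + n))) :
    Mcnt hij w ≤ i ∧ Mcnt hij w ≤ m ∧ i - Mcnt hij w ≤ n ∧ m - Mcnt hij w ≤ j ∧
      Fintype.card {z : Fin n //
        ((((finSumFinEquiv : Fin i ⊕ Fin j ≃ Fin (i + j)).trans (finCongr hij)).symm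
          (w (finSumFinEquiv (Sum.inr z)))).isLeft = true)} = i - Mcnt hij w := by
  classical
  set e2 : Fin i ⊕ Fin j ≃ Fin (m + n) :=
    (finSumFinEquiv : Fin i ⊕ Fin j ≃ Fin (i + j)).trans (finCongr hij) with he2
  set Q : Fin m ⊕ Fin n → Prop :=
    fun s => ((e2.symm (w (finSumFinEquiv s))).isLeft = true) with hQ
  have htot : Fintype.card {s // Q s} = i := by
    have e : {s // Q s} ≃ {u : Fin i ⊕ Fin j // u.isLeft = true} :=
      Equiv.subtypeEquiv
        ((finSumFinEquiv : Fin m ⊕ Fin n ≃ Fin (m + n)).trans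
          (((w : Equiv.Perm (Fin (m + n))) : Fin (m + n) ≃ Fin (m + n)).trans e2.symm))
        (fun s => Iff.rfl)
    rw [Fintype.card_congr e, card_isLeft, Fintype.card_fin]
  have hsplit : Fintype.card {s // Q s} =
      Fintype.card {z : Fin m // Q (Sum.inl z)} + Fintype.card {z : Fin n // Q (Sum.inr z)} :=
    card_sum_subtype Q
  have hcnt : Mcnt hij w = Fintype.card {z : Fin m // Q (Sum.inl z)} := rfl
  -- complement counts
  have htotC : Fintype.card {s // ¬ Q s} = j := by
    rw [Fintype.card_subtype_compl, htot, Fintype.card_sum, Fintype.card_fin, Fintype.card_fin]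
    omega
  have hsplitC : Fintype.card {s // ¬ Q s} =
      Fintype.card {z : Fin m // ¬ Q (Sum.inl z)} + Fintype.card {z : Fin n // ¬ Q (Sum.inr z)} :=
    card_sum_subtype _
  have hm' : Fintype.card {z : Fin m // ¬ Q (Sum.inl z)}
      = m - Fintype.card {z : Fin m // Q (Sum.inl z)} := by
    rw [Fintype.card_subtype_compl, Fintype.card_fin]
  have h1 : Fintype.card {z : Fin m // Q (Sum.inl z)} ≤ m := by
    have := Fintype.card_subtype_le (fun z : Fin m => Q (Sum.inl z))
    rwa [Fintype.card_fin] at this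
  have h2 : Fintype.card {z : Fin n // Q (Sum.inr z)} ≤ n := by
    have := Fintype.card_subtype_le (fun z : Fin n => Q (Sum.inr z))
    rwa [Fintype.card_fin] at this
  have hbridge : Fintype.card {z : Fin n //
      ((e2.symm (w (finSumFinEquiv (Sum.inr z)))).isLeft = true)}
      = Fintype.card {z : Fin n // Q (Sum.inr z)} := rfl
  rw [hcnt, hbridge]
  refine ⟨by omega, by omega, by omega, by omega, by omega⟩

def Mc (hij : i + j = m + n) (w : Equiv.Perm (Fin (m + n))) : MIdx m n i j :=
  ⟨⟨Mcnt hij w, by have := (Mcnt_props hij w).1; omega⟩,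
   ⟨(Mcnt_props hij w).1, (Mcnt_props hij w).2.1, (Mcnt_props hij w).2.2.1,
    (Mcnt_props hij w).2.2.2.1⟩⟩

end MainDefs

section MainLemmas
variable {m n i j : ℕ}

lemma Mhc (hij : i + j = m + n) (k : Equiv.Perm (Fin i) × Equiv.Perm (Fin j))
    (w : Equiv.Perm (Fin (m + n))) (η : Equiv.Perm (Fin m) × Equiv.Perm (Fin n)) :
    Mc hij (blockEmb ((finSumFinEquiv : Fin i ⊕ Fin j ≃ Fin (i + j)).trans (finCongr hij)) k * w *
      blockEmb (finSumFinEquiv : Fin m ⊕ Fin n ≃ Fin (m + n)) η) = Mc hij w := by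
  classical
  apply Subtype.ext
  apply Fin.ext
  dsimp only [Mc]
  show Mcnt hij _ = Mcnt hij w
  set e1 : Fin m ⊕ Fin n ≃ Fin (m + n) := finSumFinEquiv with he1
  set e2 : Fin i ⊕ Fin j ≃ Fin (m + n) :=
    (finSumFinEquiv : Fin i ⊕ Fin j ≃ Fin (i + j)).trans (finCongr hij) with he2
  have hpt : ∀ z : Fin m,
      e2.symm ((blockEmb e2 k * w * blockEmb e1 η) (e1 (Sum.inl z)))
        = Sum.map ⇑k.1 ⇑k.2 (e2.symm (w (e1 (Sum.inl (η.1 z))))) := by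
    intro z
    rw [Equiv.Perm.mul_apply, Equiv.Perm.mul_apply]
    have h1 : blockEmb e1 η (e1 (Sum.inl z)) = e1 (Sum.inl (η.1 z)) := by
      rw [show blockEmb e1 η = blockEmb e1 (η.1, η.2) from rfl, blockEmb_apply,
        Equiv.symm_apply_apply, Sum.map_inl]
    rw [h1]
    rw [show blockEmb e2 k = blockEmb e2 (k.1, k.2) from rfl, blockEmb_apply,
      Equiv.symm_apply_apply]
  unfold Mcnt
  apply Fintype.card_congr
  refine Equiv.subtypeEquiv η.1 (fun z => ?_)
  rw [show (((finSumFinEquiv : Fin i ⊕ Fin j ≃ Fin (i + j)).trans (finCongr hij)).symm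
      ((blockEmb ((finSumFinEquiv : Fin i ⊕ Fin j ≃ Fin (i + j)).trans (finCongr hij)) k * w *
        blockEmb (finSumFinEquiv : Fin m ⊕ Fin n ≃ Fin (m + n)) η)
        (finSumFinEquiv (Sum.inl z)))) = Sum.map ⇑k.1 ⇑k.2 (e2.symm (w (e1 (Sum.inl (η.1 z)))))
    from hpt z]
  rcases e2.symm (w (e1 (Sum.inl (η.1 z)))) with u | u <;> simp

lemma Mhct (hij : i + j = m + n) (a : MIdx m n i j) : Mc hij (Mt hij a) = a := by
  classical
  apply Subtype.ext
  apply Fin.ext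
  dsimp only [Mc]
  show Mcnt hij _ = a.1.1
  set e1 : Fin m ⊕ Fin n ≃ Fin (m + n) := finSumFinEquiv with he1
  set e2 : Fin i ⊕ Fin j ≃ Fin (m + n) :=
    (finSumFinEquiv : Fin i ⊕ Fin j ≃ Fin (i + j)).trans (finCongr hij) with he2
  have hpt : ∀ z : Fin m,
      e2.symm (Mt hij a (e1 (Sum.inl z))) = MS hij a (Sum.inl z) := by
    intro z
    simp [Mt, MS, he1, he2]
  have hpt2 : ∀ z : Fin m,
      (MS hij a (Sum.inl z)).isLeft = ((MeM a).symm z).isLeft := by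
    intro z
    rcases hv : (MeM a).symm z with v | v <;>
      simp [MS, shufG, hv]
  unfold Mcnt
  rw [Fintype.card_congr (Equiv.subtypeEquivRight (q := fun z : Fin m =>
    ((MeM a).symm z).isLeft = true) (fun z => by rw [hpt z, hpt2 z]))]
  rw [Fintype.card_congr (Equiv.subtypeEquiv
    (q := fun s : Fin a.1.1 ⊕ Fin (m - a.1.1) => s.isLeft = true)
    (MeM a).symm (fun z => Iff.rfl))]
  rw [card_isLeft, Fintype.card_fin]

lemma Mt_apply (hij : i + j = m + n) (a : MIdx m n i j) (s : Fin m ⊕ Fin n) :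
    Mt hij a (finSumFinEquiv s)
      = ((finSumFinEquiv : Fin i ⊕ Fin j ≃ Fin (i + j)).trans (finCongr hij)) (MS hij a s) := by
  simp [Mt]

lemma Mt_inv_apply (hij : i + j = m + n) (a : MIdx m n i j) (z : Fin (m + n)) :
    (Mt hij a)⁻¹ z = finSumFinEquiv ((MS hij a).symm
      (((finSumFinEquiv : Fin i ⊕ Fin j ≃ Fin (i + j)).trans (finCongr hij)).symm z)) := by
  show (Mt hij a).symm z = _
  simp [Mt]

lemma Mhcomm (hij : i + j = m + n) (a : MIdx m n i j) (d : MD a) :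
    blockEmb ((finSumFinEquiv : Fin i ⊕ Fin j ≃ Fin (i + j)).trans (finCongr hij))
        (Mchi hij a d)
      = Mt hij a * blockEmb (finSumFinEquiv : Fin m ⊕ Fin n ≃ Fin (m + n)) (Mtheta a d) *
        (Mt hij a)⁻¹ := by
  obtain ⟨⟨p1, p2⟩, p3, p4⟩ := d
  set e1 : Fin m ⊕ Fin n ≃ Fin (m + n) := finSumFinEquiv with he1
  set e2 : Fin i ⊕ Fin j ≃ Fin (m + n) :=
    (finSumFinEquiv : Fin i ⊕ Fin j ≃ Fin (i + j)).trans (finCongr hij) with he2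
  apply Equiv.ext
  intro z
  have key := shufG_natural (MeI a) (MeJ hij a) (MeM a) (MeN a) p1 p2 p3 p4 (e2.symm z)
  rw [Equiv.Perm.mul_apply, Equiv.Perm.mul_apply, Mt_inv_apply]
  rw [show blockEmb e1 (Mtheta a ((p1, p2), (p3, p4)))
      (e1 ((MS hij a).symm (e2.symm z)))
    = e1 (Sum.map ⇑(blockEmb (MeM a) (p1, p3)) ⇑(blockEmb (MeN a) (p2, p4))
        (e1.symm (e1 ((MS hij a).symm (e2.symm z))))) from rfl]
  rw [Equiv.symm_apply_apply, Mt_apply]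
  rw [show blockEmb e2 (Mchi hij a ((p1, p2), (p3, p4))) z
    = e2 (Sum.map ⇑(blockEmb (MeI a) (p1, p2)) ⇑(blockEmb (MeJ hij a) (p3, p4))
        (e2.symm z)) from rfl]
  exact congrArg e2 key

lemma Mhrange (hij : i + j = m + n) (a : MIdx m n i j)
    (k : Equiv.Perm (Fin i) × Equiv.Perm (Fin j))
    (hk : (Mt hij a)⁻¹ * blockEmb ((finSumFinEquiv : Fin i ⊕ Fin j ≃ Fin (i + j)).trans
        (finCongr hij)) k * Mt hij a
      ∈ Set.range ⇑(blockEmb (finSumFinEquiv : Fin m ⊕ Fin n ≃ Fin (m + n)))) :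
    k ∈ Set.range ⇑(Mchi hij a) := by
  obtain ⟨η, hη⟩ := hk
  set e1 : Fin m ⊕ Fin n ≃ Fin (m + n) := finSumFinEquiv with he1
  set e2 : Fin i ⊕ Fin j ≃ Fin (m + n) :=
    (finSumFinEquiv : Fin i ⊕ Fin j ≃ Fin (i + j)).trans (finCongr hij) with he2
  have hpt : ∀ s : Fin m ⊕ Fin n,
      (MS hij a).symm (Sum.map ⇑k.1 ⇑k.2 (MS hij a s)) = Sum.map ⇑η.1 ⇑η.2 s := by
    intro s
    have h := congrArg (fun p : Equiv.Perm (Fin (m + n)) => p (e1 s)) hη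
    simp only [Equiv.Perm.mul_apply] at h
    rw [Mt_apply] at h
    rw [show blockEmb e2 k (e2 (MS hij a s))
      = e2 (Sum.map ⇑k.1 ⇑k.2 (e2.symm (e2 (MS hij a s)))) from
        blockEmb_apply e2 k.1 k.2 _] at h
    rw [Equiv.symm_apply_apply, Mt_inv_apply, Equiv.symm_apply_apply] at h
    rw [show blockEmb e1 η (e1 s) = e1 (Sum.map ⇑η.1 ⇑η.2 (e1.symm (e1 s))) from
      blockEmb_apply e1 η.1 η.2 _] at h
    rw [Equiv.symm_apply_apply] at h
    exact e1.injective h.symm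
  obtain ⟨q1, q2, q3, q4, hk1, hk2⟩ :=
    shufG_range (MeI a) (MeJ hij a) (MeM a) (MeN a) k.1 k.2 η.1 η.2 hpt
  refine ⟨((q1, q2), (q3, q4)), ?_⟩
  have : Mchi hij a ((q1, q2), (q3, q4))
      = (blockEmb (MeI a) (q1, q2), blockEmb (MeJ hij a) (q3, q4)) := rfl
  rw [this, blockEmb_as_permCongr, blockEmb_as_permCongr, ← hk1, ← hk2]

lemma card_modelM (a : MIdx m n i j) :
    Fintype.card {z : Fin m // ((MeM a).symm z).isLeft = true} = a.1.1 := by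
  rw [Fintype.card_congr (Equiv.subtypeEquiv
    (q := fun s : Fin a.1.1 ⊕ Fin (m - a.1.1) => s.isLeft = true)
    (MeM a).symm (fun z => Iff.rfl)), card_isLeft, Fintype.card_fin]

lemma card_modelN (a : MIdx m n i j) :
    Fintype.card {z : Fin n // ((MeN a).symm z).isLeft = true} = i - a.1.1 := by
  rw [Fintype.card_congr (Equiv.subtypeEquiv
    (q := fun s : Fin (i - a.1.1) ⊕ Fin (n - (i - a.1.1)) => s.isLeft = true)
    (MeN a).symm (fun z => Iff.rfl)), card_isLeft, Fintype.card_fin]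

lemma Mhsurj (hij : i + j = m + n) (w : Equiv.Perm (Fin (m + n))) :
    ∃ (k : Equiv.Perm (Fin i) × Equiv.Perm (Fin j))
      (η : Equiv.Perm (Fin m) × Equiv.Perm (Fin n)),
      w = blockEmb ((finSumFinEquiv : Fin i ⊕ Fin j ≃ Fin (i + j)).trans (finCongr hij)) k *
        Mt hij (Mc hij w) *
        blockEmb (finSumFinEquiv : Fin m ⊕ Fin n ≃ Fin (m + n)) η := by
  classical
  set a := Mc hij w with ha
  set e1 : Fin m ⊕ Fin n ≃ Fin (m + n) := finSumFinEquiv with he1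
  set e2 : Fin i ⊕ Fin j ≃ Fin (m + n) :=
    (finSumFinEquiv : Fin i ⊕ Fin j ≃ Fin (i + j)).trans (finCongr hij) with he2
  set β : Fin m ⊕ Fin n ≃ Fin i ⊕ Fin j :=
    e1.trans (((w : Fin (m + n) ≃ Fin (m + n))).trans e2.symm) with hβ
  have hval : a.1.1 = Mcnt hij w := rfl
  have hm1 : Fintype.card {z : Fin m // (β (Sum.inl z)).isLeft = true} = Mcnt hij w := rfl
  have hn1 : Fintype.card {z : Fin n // (β (Sum.inr z)).isLeft = true} = i - Mcnt hij w :=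
    (Mcnt_props hij w).2.2.2.2
  obtain ⟨p, hp⟩ := existsPermPred (fun z : Fin m => (β (Sum.inl z)).isLeft = true)
    (fun z : Fin m => ((MeM a).symm z).isLeft = true)
    (by rw [hm1, card_modelM, hval])
  obtain ⟨q, hq⟩ := existsPermPred (fun z : Fin n => (β (Sum.inr z)).isLeft = true)
    (fun z : Fin n => ((MeN a).symm z).isLeft = true)
    (by rw [hn1, card_modelN, hval])
  set S : Fin m ⊕ Fin n ≃ Fin i ⊕ Fin j := MS hij a with hS
  set γ : Equiv.Perm (Fin i ⊕ Fin j) := S.symm.trans ((Equiv.sumCongr p q).trans β) with hγ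
  have hL : ∀ u : Fin i, (γ (Sum.inl u)).isLeft = true := by
    intro u
    rcases hv : (MeI a).symm u with v | v
    · have h1 : S.symm (Sum.inl u) = Sum.inl ((MeM a) (Sum.inl v)) := by
        simp [hS, MS, shufG, hv]
      have h2 : γ (Sum.inl u) = β (Sum.inl (p ((MeM a) (Sum.inl v)))) := by
        simp [hγ, h1]
      rw [h2]
      have h3 := (hp ((MeM a) (Sum.inl v))).mpr (by rw [Equiv.symm_apply_apply]; rfl)
      exact h3
    · have h1 : S.symm (Sum.inl u) = Sum.inr ((MeN a) (Sum.inl v)) := by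
        simp [hS, MS, shufG, hv]
      have h2 : γ (Sum.inl u) = β (Sum.inr (q ((MeN a) (Sum.inl v)))) := by
        simp [hγ, h1]
      rw [h2]
      exact (hq ((MeN a) (Sum.inl v))).mpr (by rw [Equiv.symm_apply_apply]; rfl)
  obtain ⟨u', v', hγ'⟩ := splitPerm γ hL
  refine ⟨(u', v'), (p⁻¹, q⁻¹), ?_⟩
  apply Equiv.ext
  intro z
  rw [Equiv.Perm.mul_apply, Equiv.Perm.mul_apply]
  rw [show blockEmb e1 (p⁻¹, q⁻¹) z = e1 (Sum.map ⇑p⁻¹ ⇑q⁻¹ (e1.symm z)) from rfl]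
  rw [show Mt hij (Mc hij w) = Mt hij a from rfl, Mt_apply]
  rw [show blockEmb e2 (u', v')
      ((finSumFinEquiv.trans (finCongr hij)) (MS hij a (Sum.map ⇑p⁻¹ ⇑q⁻¹ (e1.symm z))))
    = e2 (Sum.map ⇑u' ⇑v' (e2.symm (e2 (S (Sum.map ⇑p⁻¹ ⇑q⁻¹ (e1.symm z)))))) from rfl]
  rw [Equiv.symm_apply_apply]
  have hg : ∀ X, Sum.map ⇑u' ⇑v' X = β ((Equiv.sumCongr p q) (S.symm X)) := by
    intro X
    rw [show Sum.map ⇑u' ⇑v' X = (Equiv.sumCongr u' v') X from rfl, ← hγ']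
    simp [hγ]
  rw [hg, Equiv.symm_apply_apply]
  have hpq : ∀ s : Fin m ⊕ Fin n, (Equiv.sumCongr p q) (Sum.map ⇑p⁻¹ ⇑q⁻¹ s) = s := by
    rintro (s | s) <;> simp
  rw [hpq]
  rw [show β (e1.symm z) = e2.symm (w (e1 (e1.symm z))) from rfl,
    Equiv.apply_symm_apply, Equiv.apply_symm_apply]

end MainLemmas


section Abstract
variable {G H K : Type*} [Group G] [Group H] [Group K]
    [Fintype G] [Fintype H] [Fintype K]

lemma extend_conj_invariant (φ : H →* G) (hφ : Function.Injective φ)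
    (f : H → ℂ) (hf : IsClassFun f) (η : H) (u : G) :
    Function.extend (⇑φ) f 0 (φ η * u * (φ η)⁻¹) = Function.extend (⇑φ) f 0 u := by
  by_cases hu : ∃ h0, φ h0 = u
  · obtain ⟨h0, rfl⟩ := hu
    have : φ η * φ h0 * (φ η)⁻¹ = φ (η * h0 * η⁻¹) := by
      simp [map_mul, map_inv, mul_assoc]
    rw [this, hφ.extend_apply, hφ.extend_apply]
    exact hf h0 η
  · have hu2 : ¬∃ h0, φ h0 = φ η * u * (φ η)⁻¹ := by
      rintro ⟨h0, hh0⟩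
      exact hu ⟨η⁻¹ * h0 * η, by rw [map_mul, map_mul, map_inv, hh0]; group⟩
    rw [Function.extend_apply' _ _ _ hu, Function.extend_apply' _ _ _ hu2]
    rfl

theorem mackey_abstract
    {ι : Type*} [Fintype ι] [DecidableEq ι]
    (D : ι → Type*) [∀ a, Group (D a)] [∀ a, Fintype (D a)]
    (φ : H →* G) (ψ : K →* G) (χ : ∀ a, D a →* K) (θ : ∀ a, D a →* H)
    (hφ : Function.Injective φ)
    (hχ : ∀ a, Function.Injective (χ a))
    (f : H → ℂ) (hf : IsClassFun f)
    (c : G → ι) (t : ι → G)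
    (hc : ∀ (k : K) (w : G) (η : H), c (ψ k * w * φ η) = c w)
    (hct : ∀ a, c (t a) = a)
    (hsurj : ∀ w : G, ∃ (k : K) (η : H), w = ψ k * t (c w) * φ η)
    (hcomm : ∀ a (d : D a), ψ (χ a d) = t a * φ (θ a d) * (t a)⁻¹)
    (hrange : ∀ a (k : K), ((t a)⁻¹ * ψ k * t a) ∈ Set.range ⇑φ → k ∈ Set.range ⇑(χ a))
    (κ : K) :
    indCF φ f (ψ κ) = ∑ a : ι, indCF (χ a) (fun d => f (θ a d)) κ := by
  classical
  set F : G → ℂ := Function.extend (⇑φ) f 0 with hF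
  have hpt : ∀ (a : ι) (k : K),
      F ((t a)⁻¹ * ψ k * t a) = Function.extend (⇑(χ a)) (fun d => f (θ a d)) 0 k := by
    intro a k
    by_cases hk : ∃ d, χ a d = k
    · obtain ⟨d, rfl⟩ := hk
      have h1 : (t a)⁻¹ * ψ (χ a d) * t a = φ (θ a d) := by
        rw [hcomm a d]; group
      rw [h1, hF, hφ.extend_apply, (hχ a).extend_apply]
    · rw [Function.extend_apply' _ _ _ hk, hF, Function.extend_apply']
      · rfl
      · rintro ⟨h0, hh0⟩
        exact hk (hrange a k ⟨h0, hh0⟩)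
  have hcardH : (Fintype.card H : ℂ) ≠ 0 := by exact_mod_cast Fintype.card_ne_zero
  rw [indCF]
  have hreidx : ∑ x : G, F (x * ψ κ * x⁻¹) = ∑ w : G, F (w⁻¹ * ψ κ * w) := by
    rw [← Equiv.sum_comp (Equiv.inv G) (fun w => F (w⁻¹ * ψ κ * w))]
    simp
  rw [hreidx, ← Fintype.sum_fiberwise c (fun w => F (w⁻¹ * ψ κ * w))]
  choose k₀ η₀ hk₀ using hsurj
  have key : ∀ a : ι, ∑ w : {w : G // c w = a}, F ((w : G)⁻¹ * ψ κ * w)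
      = (Fintype.card H : ℂ) * (Fintype.card (D a) : ℂ)⁻¹ *
        ∑ k : K, Function.extend (⇑(χ a)) (fun d => f (θ a d)) 0 (k * κ * k⁻¹) := by
    intro a
    have hΦmem : ∀ (k : K) (η : H), c (ψ k * t a * φ η) = a := by
      intro k η
      have := hc k (t a) η; rw [hct] at this; exact this
    have hΦΞ : ∀ (w : {w : G // c w = a}) (d : D a),
        ψ (k₀ w * χ a d) * t a * φ ((θ a d)⁻¹ * η₀ w) = (w : G) := by
      rintro ⟨w, hw⟩ d
      have h0 : w = ψ (k₀ w) * t a * φ (η₀ w) := by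
        have := hk₀ w; rwa [hw] at this
      simp only []
      rw [map_mul, map_mul, hcomm a d, map_inv]
      conv_rhs => rw [h0]
      group
    set Ξ : {w : G // c w = a} × D a → K × H :=
      fun p => (k₀ p.1 * χ a p.2, (θ a p.2)⁻¹ * η₀ p.1) with hΞdef
    have hΞinj : Function.Injective Ξ := by
      rintro ⟨w, d⟩ ⟨w', d'⟩ hEq
      have h1 : (Ξ (w, d)).1 = (Ξ (w', d')).1 := by rw [hEq]
      have h2 : (Ξ (w, d)).2 = (Ξ (w', d')).2 := by rw [hEq]
      simp only [hΞdef] at h1 h2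
      have hww' : (w : G) = (w' : G) := by
        rw [← hΦΞ w d, ← hΦΞ w' d', h1, h2]
      have hww : w = w' := Subtype.ext hww'
      subst hww
      have : χ a d = χ a d' := mul_left_cancel h1
      exact Prod.ext rfl (hχ a this)
    have hΞsurj : Function.Surjective Ξ := by
      rintro ⟨k, η⟩
      set w : G := ψ k * t a * φ η with hwdef
      have hw : c w = a := hΦmem k η
      have h0 : w = ψ (k₀ w) * t a * φ (η₀ w) := by
        have := hk₀ w; rwa [hw] at this
      have hthis : ψ (k₀ w) * t a * φ (η₀ w) = ψ k * t a * φ η := by rw [← h0, hwdef]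
      have key2 : ψ ((k₀ w)⁻¹ * k) * (t a * φ η) = t a * φ (η₀ w) := by
        rw [map_mul, map_inv]
        calc (ψ (k₀ w))⁻¹ * ψ k * (t a * φ η)
            = (ψ (k₀ w))⁻¹ * (ψ k * t a * φ η) := by group
          _ = (ψ (k₀ w))⁻¹ * (ψ (k₀ w) * t a * φ (η₀ w)) := by rw [hthis]
          _ = t a * φ (η₀ w) := by group
      have hrng : (t a)⁻¹ * ψ ((k₀ w)⁻¹ * k) * t a ∈ Set.range ⇑φ := by
        refine ⟨η₀ w * η⁻¹, ?_⟩
        rw [map_mul, map_inv, eq_comm]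
        calc (t a)⁻¹ * ψ ((k₀ w)⁻¹ * k) * t a
            = (t a)⁻¹ * (ψ ((k₀ w)⁻¹ * k) * (t a * φ η)) * (φ η)⁻¹ := by group
          _ = (t a)⁻¹ * (t a * φ (η₀ w)) * (φ η)⁻¹ := by rw [key2]
          _ = φ (η₀ w) * (φ η)⁻¹ := by group
      obtain ⟨d, hd⟩ := hrange a _ hrng
      refine ⟨(⟨w, hw⟩, d), ?_⟩
      have hk : k₀ (⟨w, hw⟩ : {w : G // c w = a}) * χ a d = k := by
        rw [hd]; group
      have hη : (θ a d)⁻¹ * η₀ (⟨w, hw⟩ : {w : G // c w = a}) = η := by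
        have hA := hΦΞ ⟨w, hw⟩ d
        simp only [hk] at hA
        -- hA : ψ k * t a * φ ((θ a d)⁻¹ * η₀ w) = w = ψ k * t a * φ η
        have : φ ((θ a d)⁻¹ * η₀ (⟨w, hw⟩ : {w : G // c w = a})) = φ η := by
          apply mul_left_cancel (a := ψ k * t a)
          have : (w : G) = ψ k * t a * φ η := hwdef
          rw [mul_assoc] at hA ⊢
          rw [hA, hwdef, mul_assoc]
        exact hφ this
      simp only [hΞdef]
      exact Prod.ext hk hη
    set ΞE : ({w : G // c w = a} × D a) ≃ K × H := Equiv.ofBijective Ξ ⟨hΞinj, hΞsurj⟩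
    have hsum1 : ∑ p : {w : G // c w = a} × D a,
        F ((ψ (ΞE p).1 * t a * φ (ΞE p).2)⁻¹ * ψ κ * (ψ (ΞE p).1 * t a * φ (ΞE p).2))
        = ∑ q : K × H, F ((ψ q.1 * t a * φ q.2)⁻¹ * ψ κ * (ψ q.1 * t a * φ q.2)) :=
      Equiv.sum_comp ΞE
        (fun q => F ((ψ q.1 * t a * φ q.2)⁻¹ * ψ κ * (ψ q.1 * t a * φ q.2)))
    have hsum2 : ∀ p : {w : G // c w = a} × D a,
        F ((ψ (ΞE p).1 * t a * φ (ΞE p).2)⁻¹ * ψ κ * (ψ (ΞE p).1 * t a * φ (ΞE p).2))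
        = F ((p.1 : G)⁻¹ * ψ κ * p.1) := by
      rintro ⟨w, d⟩
      have : ψ (ΞE (w, d)).1 * t a * φ (ΞE (w, d)).2 = (w : G) := by
        have : ΞE (w, d) = Ξ (w, d) := rfl
        rw [this, hΞdef]
        exact hΦΞ w d
      rw [this]
    have hsum3 : ∀ q : K × H,
        F ((ψ q.1 * t a * φ q.2)⁻¹ * ψ κ * (ψ q.1 * t a * φ q.2))
        = F ((t a)⁻¹ * ψ (q.1⁻¹ * κ * q.1) * t a) := by
      rintro ⟨k, η⟩
      have hsplit : (ψ k * t a * φ η)⁻¹ * ψ κ * (ψ k * t a * φ η)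
          = φ η⁻¹ * ((t a)⁻¹ * ψ (k⁻¹ * κ * k) * t a) * (φ η⁻¹)⁻¹ := by
        rw [map_mul, map_mul, map_inv, map_inv]; group
      rw [hsplit, hF, extend_conj_invariant φ hφ f hf]
    have hDne : (Fintype.card (D a) : ℂ) ≠ 0 := by exact_mod_cast Fintype.card_ne_zero
    have e1 : ∑ p : {w : G // c w = a} × D a, F ((p.1 : G)⁻¹ * ψ κ * p.1)
        = (Fintype.card (D a) : ℂ) * ∑ w : {w : G // c w = a}, F ((w : G)⁻¹ * ψ κ * w) := by
      rw [Fintype.sum_prod_type]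
      simp only [Finset.sum_const, Finset.card_univ, nsmul_eq_mul]
      rw [← Finset.mul_sum]
    calc ∑ w : {w : G // c w = a}, F ((w : G)⁻¹ * ψ κ * w)
        = (Fintype.card (D a) : ℂ)⁻¹ * ∑ p : {w : G // c w = a} × D a,
            F ((p.1 : G)⁻¹ * ψ κ * p.1) := by
          rw [e1, ← mul_assoc, inv_mul_cancel₀ hDne, one_mul]
      _ = (Fintype.card (D a) : ℂ)⁻¹ * ∑ q : K × H,
            F ((ψ q.1 * t a * φ q.2)⁻¹ * ψ κ * (ψ q.1 * t a * φ q.2)) := by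
          rw [← hsum1]
          congr 1
          exact Finset.sum_congr rfl (fun p _ => (hsum2 p).symm)
      _ = (Fintype.card (D a) : ℂ)⁻¹ * ((Fintype.card H : ℂ) *
            ∑ k : K, F ((t a)⁻¹ * ψ (k⁻¹ * κ * k) * t a)) := by
          congr 1
          calc ∑ q : K × H, F ((ψ q.1 * t a * φ q.2)⁻¹ * ψ κ * (ψ q.1 * t a * φ q.2))
              = ∑ q : K × H, F ((t a)⁻¹ * ψ (q.1⁻¹ * κ * q.1) * t a) :=
                Finset.sum_congr rfl fun q _ => hsum3 q
            _ = ∑ k : K, ∑ _η : H, F ((t a)⁻¹ * ψ (k⁻¹ * κ * k) * t a) :=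
                Fintype.sum_prod_type
                  (f := fun q : K × H => F ((t a)⁻¹ * ψ (q.1⁻¹ * κ * q.1) * t a))
            _ = (Fintype.card H : ℂ) * ∑ k : K, F ((t a)⁻¹ * ψ (k⁻¹ * κ * k) * t a) := by
                simp only [Finset.sum_const, Finset.card_univ, nsmul_eq_mul]
                rw [← Finset.mul_sum]
      _ = (Fintype.card H : ℂ) * (Fintype.card (D a) : ℂ)⁻¹ *
            ∑ k : K, Function.extend (⇑(χ a)) (fun d => f (θ a d)) 0 (k * κ * k⁻¹) := by
          rw [← mul_assoc, mul_comm ((Fintype.card (D a) : ℂ)⁻¹)]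
          congr 1
          rw [← Equiv.sum_comp (Equiv.inv K) (fun k => Function.extend (⇑(χ a)) (fun d => f (θ a d)) 0 (k * κ * k⁻¹))]
          refine Finset.sum_congr rfl (fun k _ => ?_)
          simp only [Equiv.inv_apply]
          rw [hpt a]
          simp
  rw [Finset.mul_sum]
  refine Finset.sum_congr rfl (fun a _ => ?_)
  rw [key a]
  simp only [indCF]
  rw [← mul_assoc, ← mul_assoc, inv_mul_cancel₀ hcardH, one_mul]


end Abstract

theorem mackey_bialgebra_compatibility (m n i j : ℕ) (hij : i + j = m + n)
    (x : Equiv.Perm (Fin m) → ℂ) (y : Equiv.Perm (Fin n) → ℂ)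
    (hx : IsClassFun x) (hy : IsClassFun y) :
    ∀ (g : Equiv.Perm (Fin i)) (h : Equiv.Perm (Fin j)),
      indCF (blockEmb (finSumFinEquiv : Fin m ⊕ Fin n ≃ Fin (m + n)))
          (fun q => x q.1 * y q.2)
          (blockEmb (finSumFinEquiv.trans (finCongr hij)) (g, h)) =
        ∑ a ∈ Finset.range (i + 1),
          if hc : a ≤ i ∧ a ≤ m ∧ i - a ≤ n ∧ m - a ≤ j then
            indCF
              ((blockEmb ((finSumFinEquiv :
                  Fin a ⊕ Fin (i - a) ≃ Fin (a + (i - a))).trans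
                    (finCongr (by omega)))).prodMap
                (blockEmb ((finSumFinEquiv :
                  Fin (m - a) ⊕ Fin (n - (i - a)) ≃
                    Fin ((m - a) + (n - (i - a)))).trans (finCongr (by omega)))))
              (fun q =>
                x (blockEmb ((finSumFinEquiv :
                      Fin a ⊕ Fin (m - a) ≃ Fin (a + (m - a))).trans
                        (finCongr (by omega))) (q.1.1, q.2.1)) *
                y (blockEmb ((finSumFinEquiv :
                      Fin (i - a) ⊕ Fin (n - (i - a)) ≃
                        Fin ((i - a) + (n - (i - a)))).trans
                        (finCongr (by omega))) (q.1.2, q.2.2)))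
              (g, h)
          else 0 := by
  intro g h
  classical
  have hfcf : IsClassFun (fun q : Equiv.Perm (Fin m) × Equiv.Perm (Fin n) => x q.1 * y q.2) := by
    rintro ⟨q1, q2⟩ ⟨h1, h2⟩
    exact congrArg₂ (· * ·) (hx q1 h1) (hy q2 h2)
  have hχinj : ∀ a : MIdx m n i j, Function.Injective ⇑(Mchi hij a) := by
    intro a p q hpq
    exact Prod.ext (blockEmb_injective (MeI a) (congrArg Prod.fst hpq))
      (blockEmb_injective (MeJ hij a) (congrArg Prod.snd hpq))
  have main := mackey_abstract (G := Equiv.Perm (Fin (m + n)))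
    (H := Equiv.Perm (Fin m) × Equiv.Perm (Fin n))
    (K := Equiv.Perm (Fin i) × Equiv.Perm (Fin j))
    (ι := MIdx m n i j) (D := MD)
    (φ := blockEmb (finSumFinEquiv : Fin m ⊕ Fin n ≃ Fin (m + n)))
    (ψ := blockEmb ((finSumFinEquiv : Fin i ⊕ Fin j ≃ Fin (i + j)).trans (finCongr hij)))
    (χ := Mchi hij) (θ := Mtheta)
    (blockEmb_injective _) hχinj
    (fun q => x q.1 * y q.2) hfcf
    (Mc hij) (Mt hij)
    (fun k w η => Mhc hij k w η) (Mhct hij) (Mhsurj hij) (Mhcomm hij) (Mhrange hij)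
    (g, h)
  rw [main]
  rw [Finset.sum_range (fun aa => if hc : aa ≤ i ∧ aa ≤ m ∧ i - aa ≤ n ∧ m - aa ≤ j then _ else 0)]
  rw [← Equiv.sum_comp (Equiv.sumCompl (fun aa : Fin (i + 1) => Mconstr m n i j aa.1))]
  rw [Fintype.sum_sum_type]
  rw [Finset.sum_congr rfl (fun (a : {aa : Fin (i + 1) // ¬ Mconstr m n i j aa.1}) _ => by
        simp only [Equiv.sumCompl_apply_inr]
        exact dif_neg a.2),
    Finset.sum_const_zero, add_zero]
  simp only [Equiv.sumCompl_apply_inl]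
  refine Finset.sum_congr rfl (fun a _ => ?_)
  erw [dif_pos (show (a.1 : ℕ) ≤ i ∧ (a.1 : ℕ) ≤ m ∧
    i - (a.1 : ℕ) ≤ n ∧ m - (a.1 : ℕ) ≤ j from a.2)]
  rfl
end
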